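/- arXiv:1908.11604 — 2 statements merged into one kernel-verified Lean document; each statement's English description precedes it below -/
import Mathlib

section
/- The interior rest point x* = 1 - c(1-α)/(α(m-n)) of the replicator dynamics ẋ = x(1-x)[α(m-n)(1-x) - c(1-α)] is asymptotically stable: the derivative of the right-hand side at x* is strictly negative. -/
theorem replicator_interior_stable (α m n c : ℝ) (hα : α ∈ Set.Ioo (0:ℝ) 1)
    (hmn : m > n) (hnc : n > c) (hc : c > 0)
    (hbound : c < (m - n) * α / (1 - α))
    (xs : ℝ) (hxs : xs = 1 - c * (1 - α) / (α * (m - n))) :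
    deriv (fun x : ℝ => x * (1 - x) * (α * (m - n) * (1 - x) - c * (1 - α))) xs < 0 := by
  obtain ⟨hα0, hα1⟩ := hα
  have h1 : HasDerivAt (fun x : ℝ => x) 1 xs := hasDerivAt_id xs
  have h2 : HasDerivAt (fun x : ℝ => 1 - x) (-1) xs := by
    simpa using h1.const_sub 1
  have h3 : HasDerivAt (fun x : ℝ => α * (m - n) * (1 - x) - c * (1 - α))
      (α * (m - n) * (-1)) xs := (h2.const_mul (α * (m - n))).sub_const _
  have hD : HasDerivAt (fun x : ℝ => x * (1 - x) * (α * (m - n) * (1 - x) - c * (1 - α)))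
      ((1 * (1 - xs) + xs * (-1)) * (α * (m - n) * (1 - xs) - c * (1 - α))
        + xs * (1 - xs) * (α * (m - n) * (-1))) xs := (h1.mul h2).mul h3
  rw [hD.deriv]
  have hA : 0 < α * (m - n) := by nlinarith
  have hzero : α * (m - n) * (1 - xs) - c * (1 - α) = 0 := by
    rw [hxs]; field_simp [sub_ne_zero.mpr hmn.ne']; ring
  have hx1 : 1 - xs = c * (1 - α) / (α * (m - n)) := by rw [hxs]; ring
  have hx1pos : 0 < 1 - xs := by
    rw [hx1]
    apply div_pos (by nlinarith) hA
  have hxpos : 0 < xs := by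
    rw [hxs]
    have : c * (1 - α) / (α * (m - n)) < 1 := by
      rw [div_lt_one hA]
      have h1a : 0 < 1 - α := by linarith
      nlinarith [(lt_div_iff₀ h1a).mp hbound]
    linarith
  rw [hzero]
  nlinarith [mul_pos hxpos hx1pos]
end

section
/- The probability that a random match of two bilinguals results in language B being spoken, given each plays R independently with probability x*, equals 2x* - x*², and as a function of α (with x* = x*(α) = 1 - (1-α)c/(α(m-n))) the quantity E[KE] = α²(2x*(α) - x*(α)²) is strictly increasing in α on (c/(m-n+c), 1). -/
theorem expected_KE_strictMono (m n c : ℝ) (hmn : m > n) (hnc : n > c) (hc : c > 0) :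
    (∀ α x : ℝ, α ^ 2 * (x ^ 2) + 2 * (α ^ 2) * x * (1 - x) = α ^ 2 * (2 * x - x ^ 2)) ∧
    StrictMonoOn
      (fun α : ℝ =>
        α ^ 2 * (2 * (1 - (1 - α) * c / (α * (m - n)))
          - (1 - (1 - α) * c / (α * (m - n))) ^ 2))
      (Set.Ioo (c / (m - n + c)) 1) := by
  constructor
  · intro α x; ring
  · intro a ha b hb hab
    have hmn' : (0:ℝ) < m - n := by linarith
    have ha0 : 0 < a := lt_trans (div_pos hc (by linarith)) ha.1
    have hb0 : 0 < b := lt_trans ha0 hab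
    have key : ∀ α : ℝ, 0 < α →
        α ^ 2 * (2 * (1 - (1 - α) * c / (α * (m - n)))
          - (1 - (1 - α) * c / (α * (m - n))) ^ 2)
        = α ^ 2 - (c / (m - n)) ^ 2 * (1 - α) ^ 2 := by
      intro α hα
      field_simp
      ring
    simp only [Set.mem_Ioo] at ha hb
    simp only
    rw [key a ha0, key b hb0]
    have h1a : (0:ℝ) < 1 - a := by linarith [ha.2]
    have h1b : (0:ℝ) ≤ 1 - b := by linarith [hb.2]
    have h1 : 0 < (b - a) * (b + a) := mul_pos (by linarith) (by linarith)
    have h2 : 0 ≤ (c / (m - n)) ^ 2 * ((b - a) * (2 - a - b)) :=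
      mul_nonneg (sq_nonneg _) (mul_nonneg (by linarith) (by linarith))
    nlinarith [h1, h2]
end
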